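/- arXiv:math/0505632 — 5 statements merged into one kernel-verified Lean document; each statement's English description precedes it below -/
import Mathlib

section
/- Suppose β > 1 and C > 0, and suppose a vector (ν_1, …, ν_n) of reals satisfies Σ_{i=1}^n ν_i² i^β ≤ C² n ρ_n² where ρ_n = √(2 log n). Let n₀ be the number of indices i with |ν_i| ≥ 1. Then there is a constant C' depending only on C and β such that n₀ ≤ C' · (n ρ_n²)^{1/(1+β)}. In particular, n₀ = o(√n) as n → ∞ when β > 1. -/
open Filter Finset

theorem stmt6 (β C : ℝ) (hβ : 1 < β) (hC : 0 < C) :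
    (∃ C' : ℝ, 0 < C' ∧ ∀ n : ℕ, 2 ≤ n → ∀ ν : Fin n → ℝ,
      (∑ i : Fin n, ν i ^ 2 * ((i : ℝ) + 1) ^ β) ≤ C ^ 2 * n * (2 * Real.log n) →
      ((Finset.univ.filter fun i : Fin n => 1 ≤ |ν i|).card : ℝ)
        ≤ C' * ((n : ℝ) * (2 * Real.log n)) ^ (1 / (1 + β)))
    ∧ Tendsto
        (fun n : ℕ => ((n : ℝ) * (2 * Real.log n)) ^ (1 / (1 + β)) / Real.sqrt n)
        atTop (nhds 0) := by
  have hβ0 : (0:ℝ) < 1 + β := by linarith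
  set e : ℝ := 1 / (1 + β) with he
  have he0 : 0 < e := by positivity
  have helt : e < 1/2 := by
    rw [he, div_lt_div_iff₀ hβ0 (by norm_num)]
    linarith
  constructor
  · refine ⟨2 * (C^2) ^ e, by positivity, ?_⟩
    intro n hn ν hsum
    set S := Finset.univ.filter fun i : Fin n => 1 ≤ |ν i| with hS
    set m := S.card with hm
    have hXnn : (0:ℝ) ≤ (n:ℝ) * (2 * Real.log n) := by
      have : (0:ℝ) ≤ Real.log n := Real.log_nonneg (by exact_mod_cast Nat.one_le_of_lt hn)
      positivity
    rcases Nat.eq_zero_or_pos m with hm0 | hm1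
    · rw [hm0]
      push_cast
      exact mul_nonneg (by positivity) (Real.rpow_nonneg hXnn _)
    -- main case
    set k := m / 2 with hk
    have hkm : m ≤ 2 * k + 1 := by omega
    have hkle : (k:ℝ) ≤ (m:ℝ) / 2 := by
      calc (k:ℝ) ≤ (m:ℝ) / ((2:ℕ):ℝ) := Nat.cast_div_le
        _ = (m:ℝ) / 2 := by norm_num
    have hkm' : (m:ℝ) ≤ 2 * (k:ℝ) + 1 := by exact_mod_cast hkm
    -- split S
    have hcards : (S.filter fun i : Fin n => (i:ℕ) < k).card
        + (S.filter fun i : Fin n => ¬ (i:ℕ) < k).card = m :=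
      Finset.card_filter_add_card_filter_not _
    have hcard1 : (S.filter fun i : Fin n => (i:ℕ) < k).card ≤ k := by
      have h := Finset.card_le_card_of_injOn (s := S.filter fun i : Fin n => (i:ℕ) < k)
        (t := Finset.range k) (fun i : Fin n => (i:ℕ))
        (fun i hi => by
          simp only [Finset.mem_coe, Finset.mem_filter] at hi
          exact Finset.mem_range.2 hi.2)
        (fun a _ b _ h => Fin.val_injective h)
      exact h.trans_eq (Finset.card_range k)
    have hcard2 : (m:ℝ) / 2 ≤ ((S.filter fun i : Fin n => ¬ (i:ℕ) < k).card : ℝ) := by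
      have h1 : (m:ℝ) = ((S.filter fun i : Fin n => (i:ℕ) < k).card : ℝ)
          + ((S.filter fun i : Fin n => ¬ (i:ℕ) < k).card : ℝ) := by exact_mod_cast hcards.symm
      have h2 : ((S.filter fun i : Fin n => (i:ℕ) < k).card : ℝ) ≤ (k:ℝ) := by exact_mod_cast hcard1
      linarith
    -- lower bound on sum
    have hlow : (m:ℝ)/2 * ((m:ℝ)/2) ^ β
        ≤ ∑ i ∈ S.filter fun i : Fin n => ¬ (i:ℕ) < k, ((i:ℝ) + 1) ^ β := by
      have hb : ∀ i ∈ S.filter fun i : Fin n => ¬ (i:ℕ) < k,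
          ((m:ℝ)/2) ^ β ≤ ((i:ℝ) + 1) ^ β := by
        intro i hi
        simp only [Finset.mem_filter, not_lt] at hi
        have : (m:ℝ)/2 ≤ (i:ℝ) + 1 := by
          have : (k:ℝ) ≤ (i:ℝ) := by exact_mod_cast hi.2
          linarith [hkm', this]
        exact Real.rpow_le_rpow (by positivity) this (by linarith)
      calc (m:ℝ)/2 * ((m:ℝ)/2) ^ β
          ≤ ((S.filter fun i : Fin n => ¬ (i:ℕ) < k).card : ℝ) * ((m:ℝ)/2) ^ β := by
            apply mul_le_mul_of_nonneg_right hcard2 (Real.rpow_nonneg (by positivity) _)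
        _ ≤ ∑ i ∈ S.filter fun i : Fin n => ¬ (i:ℕ) < k, ((i:ℝ) + 1) ^ β := by
            have := Finset.card_nsmul_le_sum (S.filter fun i : Fin n => ¬ (i:ℕ) < k)
              (fun i => ((i:ℝ) + 1) ^ β) (((m:ℝ)/2) ^ β) hb
            simpa [nsmul_eq_mul] using this
    -- upper bound on sum
    have hup : ∑ i ∈ S.filter fun i : Fin n => ¬ (i:ℕ) < k, ((i:ℝ) + 1) ^ β
        ≤ C ^ 2 * ((n:ℝ) * (2 * Real.log n)) := by
      calc ∑ i ∈ S.filter fun i : Fin n => ¬ (i:ℕ) < k, ((i:ℝ) + 1) ^ β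
          ≤ ∑ i ∈ S, ((i:ℝ) + 1) ^ β := by
            apply Finset.sum_le_sum_of_subset_of_nonneg (Finset.filter_subset _ _)
            intro i _ _
            exact Real.rpow_nonneg (by positivity) _
        _ ≤ ∑ i ∈ S, ν i ^ 2 * ((i:ℝ) + 1) ^ β := by
            apply Finset.sum_le_sum
            intro i hi
            simp only [hS, Finset.mem_filter] at hi
            have h1 : 1 ≤ ν i ^ 2 := by nlinarith [hi.2, abs_nonneg (ν i), sq_abs (ν i)]
            nlinarith [Real.rpow_nonneg (by positivity : (0:ℝ) ≤ (i:ℝ)+1) β]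
        _ ≤ ∑ i : Fin n, ν i ^ 2 * ((i:ℝ) + 1) ^ β := by
            apply Finset.sum_le_sum_of_subset_of_nonneg (Finset.subset_univ _)
            intro i _ _
            positivity
        _ ≤ C ^ 2 * ((n:ℝ) * (2 * Real.log n)) := by linarith [hsum]
    -- combine
    have hm2 : (0:ℝ) < (m:ℝ)/2 := by
      have : (1:ℝ) ≤ (m:ℝ) := by exact_mod_cast hm1
      linarith
    have hkey : ((m:ℝ)/2) ^ (1 + β) ≤ C ^ 2 * ((n:ℝ) * (2 * Real.log n)) := by
      rw [Real.rpow_add hm2, Real.rpow_one]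
      linarith [hlow, hup]
    have hfinal := Real.rpow_le_rpow (Real.rpow_nonneg (by positivity) _) hkey (le_of_lt he0)
    rw [← Real.rpow_mul (le_of_lt hm2), mul_one_div, div_self (ne_of_gt hβ0),
      Real.rpow_one, Real.mul_rpow (by positivity) hXnn] at hfinal
    linarith [hfinal]
  · -- part 2
    have hlo : (fun x : ℝ => Real.log x ^ e) =o[atTop] fun x => x ^ (1/2 - e) :=
      isLittleO_log_rpow_rpow_atTop e (by linarith)
    have h1 : Tendsto (fun x : ℝ => Real.log x ^ e / x ^ (1/2 - e)) atTop (nhds 0) :=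
      hlo.tendsto_div_nhds_zero
    have h2 : Tendsto (fun x : ℝ => (2:ℝ) ^ e * (Real.log x ^ e / x ^ (1/2 - e)))
        atTop (nhds 0) := by
      simpa using h1.const_mul ((2:ℝ) ^ e)
    have h3 : Tendsto (fun x : ℝ => (x * (2 * Real.log x)) ^ e / Real.sqrt x)
        atTop (nhds 0) := by
      apply h2.congr'
      filter_upwards [eventually_ge_atTop (2:ℝ)] with x hx
      have hx0 : 0 < x := by linarith
      have hlog : 0 ≤ Real.log x := Real.log_nonneg (by linarith)
      rw [Real.mul_rpow (le_of_lt hx0) (by positivity),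
        Real.mul_rpow (by norm_num) hlog, Real.sqrt_eq_rpow,
        Real.rpow_sub hx0]
      have hne1 : x ^ (1/2 : ℝ) ≠ 0 := by positivity
      have hne2 : x ^ e ≠ 0 := by positivity
      field_simp
    have hcast : Tendsto (fun n : ℕ => ((n:ℝ))) atTop atTop := tendsto_natCast_atTop_atTop
    exact h3.comp hcast
end

section
/- Let γ > 1/2 and C > 0. Let (g_n) be a sequence of functions ℝ → ℝ that is equicontinuous at 0, satisfies ‖g_n‖_∞ ≤ M (log n)^α for some constants M, α > 0, and g_n(0) → a. Then for any sequence of vectors μ^{(n)} = (μ_1,…,μ_n) with Σ_{i=1}^n μ_i² i^{2γ} ≤ C² log n for all n, we have (1/n) Σ_{i=1}^n g_n(μ_i √n) → a, and the convergence is uniform over all such sequences (i.e., sup over μ^{(n)} satisfying the constraint of |(1/n)Σ g_n(μ_i√n) − a| → 0). -/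
open Filter Finset

theorem stmt7 (γ C M α a : ℝ) (hγ : 1 / 2 < γ) (hC : 0 < C) (hM : 0 < M) (hα : 0 < α)
    (g : ℕ → ℝ → ℝ)
    (hequi : ∀ ε > 0, ∃ δ > 0, ∀ n : ℕ, ∀ x : ℝ, |x| < δ → |g n x - g n 0| < ε)
    (hbd : ∀ n : ℕ, 2 ≤ n → ∀ x : ℝ, |g n x| ≤ M * Real.log n ^ α)
    (hlim : Tendsto (fun n : ℕ => g n 0) atTop (nhds a)) :
    ∀ ε > 0, ∃ N : ℕ, ∀ n ≥ N, ∀ μ : Fin n → ℝ,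
      (∑ i : Fin n, μ i ^ 2 * ((i : ℝ) + 1) ^ (2 * γ)) ≤ C ^ 2 * Real.log n →
      |(1 / (n : ℝ)) * ∑ i : Fin n, g n (μ i * Real.sqrt n) - a| < ε := by
  intro ε hε
  obtain ⟨δ, hδ, hδ'⟩ := hequi (ε / 3) (by linarith)
  -- summability of the weights
  have hsum : Summable (fun i : ℕ => ((i : ℝ) + 1) ^ (-(2 * γ))) := by
    have h1 : Summable (fun i : ℕ => ((i : ℝ)) ^ (-(2 * γ))) :=
      Real.summable_nat_rpow.2 (by linarith)
    have h2 := (summable_nat_add_iff 1).2 h1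
    exact h2.congr fun i => by push_cast; ring_nf
  set K := ∑' i : ℕ, ((i : ℝ) + 1) ^ (-(2 * γ)) with hKdef
  have hK0 : 0 ≤ K := tsum_nonneg fun i => Real.rpow_nonneg (by positivity) _
  set c : ℝ := 2 * M * C * Real.sqrt K / δ with hcdef
  have hc0 : 0 ≤ c := by positivity
  -- the vanishing error term
  have h0 : Tendsto (fun n : ℕ => Real.log n ^ (α + 1 / 2) / (n : ℝ) ^ ((1 : ℝ) / 2))
      atTop (nhds 0) :=
    ((isLittleO_log_rpow_rpow_atTop (α + 1 / 2)
      (by norm_num : (0:ℝ) < 1 / 2)).tendsto_div_nhds_zero).comp tendsto_natCast_atTop_atTop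
  have E1 : ∀ᶠ n : ℕ in atTop,
      c * (Real.log n ^ (α + 1 / 2) / (n : ℝ) ^ ((1 : ℝ) / 2)) < ε / 3 := by
    have := h0.const_mul c
    rw [mul_zero] at this
    exact this.eventually_lt_const (by linarith)
  have E2 : ∀ᶠ n : ℕ in atTop, |g n 0 - a| < ε / 3 := by
    have := hlim.eventually (Metric.ball_mem_nhds a (by linarith : (0:ℝ) < ε / 3))
    exact this.mono fun n hn => by simpa [Real.dist_eq] using hn
  have E3 : ∀ᶠ n : ℕ in atTop, 2 ≤ n := eventually_ge_atTop 2
  obtain ⟨N, hN⟩ := eventually_atTop.mp ((E1.and E2).and E3)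
  refine ⟨N, fun n hn μ hμ => ?_⟩
  obtain ⟨⟨hE1, hE2⟩, hn2⟩ := hN n hn
  have hn1 : (1 : ℝ) < n := by exact_mod_cast hn2
  have hnpos : (0 : ℝ) < n := by linarith
  set L := Real.log n with hLdef
  have hL : 0 < L := Real.log_pos hn1
  have hLα : 0 ≤ L ^ α := Real.rpow_nonneg hL.le _
  set s : ℝ := ∑ i : Fin n, |μ i| with hsdef
  have hs0 : 0 ≤ s := Finset.sum_nonneg fun i _ => abs_nonneg _
  -- Cauchy–Schwarz: s ≤ C √L √K
  have hpow2 : ∀ i : ℕ, ∀ t : ℝ, (((i : ℝ) + 1) ^ t) ^ 2 = ((i : ℝ) + 1) ^ (2 * t) := by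
    intro i t
    have hx : (0:ℝ) ≤ (i : ℝ) + 1 := by positivity
    rw [← Real.rpow_natCast (((i : ℝ) + 1) ^ t) 2, ← Real.rpow_mul hx]
    norm_num [mul_comm]
  have hs : s ≤ C * Real.sqrt L * Real.sqrt K := by
    have cs := Finset.sum_mul_sq_le_sq_mul_sq Finset.univ
      (fun i : Fin n => |μ i| * ((i : ℝ) + 1) ^ γ)
      (fun i : Fin n => ((i : ℝ) + 1) ^ (-γ))
    have hL1 : (∑ i : Fin n, (|μ i| * ((i : ℝ) + 1) ^ γ) * (((i : ℝ) + 1) ^ (-γ))) = s := by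
      refine Finset.sum_congr rfl fun i _ => ?_
      have hx : (0:ℝ) < (i : ℝ) + 1 := by positivity
      rw [mul_assoc, ← Real.rpow_add hx]
      simp
    have hF1 : (∑ i : Fin n, (|μ i| * ((i : ℝ) + 1) ^ γ) ^ 2) ≤ C ^ 2 * L := by
      refine le_trans (le_of_eq (Finset.sum_congr rfl fun i _ => ?_)) hμ
      rw [mul_pow, sq_abs, hpow2]
    have hF2 : (∑ i : Fin n, (((i : ℝ) + 1) ^ (-γ)) ^ 2) ≤ K := by
      have heq : (∑ i : Fin n, (((i : ℝ) + 1) ^ (-γ)) ^ 2)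
          = ∑ i ∈ Finset.range n, ((i : ℝ) + 1) ^ (-(2 * γ)) := by
        rw [Fin.sum_univ_eq_sum_range (fun i : ℕ => ((((i : ℝ) + 1)) ^ (-γ)) ^ 2)]
        exact Finset.sum_congr rfl fun i _ => by rw [hpow2]; ring_nf
      rw [heq]
      exact Summable.sum_le_tsum _ (fun i _ => Real.rpow_nonneg (by positivity) _) hsum
    have hsq : s ^ 2 ≤ (C ^ 2 * L) * K := by
      rw [← hL1]
      exact le_trans cs (mul_le_mul hF1 hF2 (Finset.sum_nonneg fun i _ => sq_nonneg _)
        (by positivity))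
    calc s = Real.sqrt (s ^ 2) := (Real.sqrt_sq hs0).symm
      _ ≤ Real.sqrt ((C ^ 2 * L) * K) := Real.sqrt_le_sqrt hsq
      _ = C * Real.sqrt L * Real.sqrt K := by
          rw [Real.sqrt_mul (by positivity), Real.sqrt_mul (by positivity),
            Real.sqrt_sq hC.le]
  -- pointwise bound
  have hpt : ∀ x : ℝ, |g n x - g n 0| ≤ ε / 3 + (2 * M * L ^ α / δ) * |x| := by
    intro x
    by_cases h : |x| < δ
    · have := (hδ' n x h).le
      have : (0:ℝ) ≤ (2 * M * L ^ α / δ) * |x| := by positivity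
      linarith [(hδ' n x h).le]
    · push_neg at h
      have h1 : |g n x - g n 0| ≤ 2 * M * L ^ α := by
        calc |g n x - g n 0| ≤ |g n x| + |g n 0| := abs_sub _ _
          _ ≤ M * L ^ α + M * L ^ α := add_le_add (hbd n hn2 x) (hbd n hn2 0)
          _ = 2 * M * L ^ α := by ring
      have h2 : 2 * M * L ^ α ≤ (2 * M * L ^ α / δ) * |x| := by
        rw [div_mul_eq_mul_div, le_div_iff₀ hδ]
        have : 0 ≤ 2 * M * L ^ α := by positivity
        nlinarith
      linarith
  -- main estimate
  have key : |(1 / (n : ℝ)) * ∑ i : Fin n, g n (μ i * Real.sqrt n) - a|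
      ≤ (1 / (n : ℝ)) * (∑ i : Fin n, |g n (μ i * Real.sqrt n) - g n 0|) + |g n 0 - a| := by
    have hid : (1 / (n : ℝ)) * ∑ i : Fin n, g n (μ i * Real.sqrt n) - a
        = (1 / (n : ℝ)) * (∑ i : Fin n, (g n (μ i * Real.sqrt n) - g n 0)) + (g n 0 - a) := by
      rw [Finset.sum_sub_distrib, Finset.sum_const, Finset.card_univ, Fintype.card_fin]
      field_simp
      simp only [mul_comm (Real.sqrt (n:ℝ))]
      ring
    rw [hid]
    refine le_trans (abs_add_le _ _) (add_le_add ?_ le_rfl)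
    rw [abs_mul, abs_of_nonneg (by positivity : (0:ℝ) ≤ 1 / (n:ℝ))]
    exact mul_le_mul_of_nonneg_left (Finset.abs_sum_le_sum_abs _ _) (by positivity)
  have hsumbd : (∑ i : Fin n, |g n (μ i * Real.sqrt n) - g n 0|)
      ≤ n * (ε / 3) + (2 * M * L ^ α / δ) * (Real.sqrt n * s) := by
    calc (∑ i : Fin n, |g n (μ i * Real.sqrt n) - g n 0|)
        ≤ ∑ i : Fin n, (ε / 3 + (2 * M * L ^ α / δ) * |μ i * Real.sqrt n|) :=
          Finset.sum_le_sum fun i _ => hpt _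
      _ = n * (ε / 3) + (2 * M * L ^ α / δ) * (Real.sqrt n * s) := by
          rw [Finset.sum_add_distrib, Finset.sum_const, Finset.card_univ, Fintype.card_fin,
            nsmul_eq_mul]
          congr 1
          rw [hsdef, Finset.mul_sum, Finset.mul_sum]
          refine Finset.sum_congr rfl fun i _ => ?_
          rw [abs_mul, abs_of_nonneg (Real.sqrt_nonneg _)]
          ring
  have hmain : (1 / (n : ℝ)) * (∑ i : Fin n, |g n (μ i * Real.sqrt n) - g n 0|)
      ≤ ε / 3 + c * (L ^ (α + 1 / 2) / (n : ℝ) ^ ((1 : ℝ) / 2)) := by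
    have hstep : (1 / (n : ℝ)) * (n * (ε / 3) + (2 * M * L ^ α / δ) * (Real.sqrt n * s))
        ≤ ε / 3 + c * (L ^ (α + 1 / 2) / (n : ℝ) ^ ((1 : ℝ) / 2)) := by
      have hss : (2 * M * L ^ α / δ) * (Real.sqrt n * s)
          ≤ (2 * M * L ^ α / δ) * (Real.sqrt n * (C * Real.sqrt L * Real.sqrt K)) := by
        refine mul_le_mul_of_nonneg_left (mul_le_mul_of_nonneg_left hs (Real.sqrt_nonneg _))
          (by positivity)
      have hrw : (1 / (n : ℝ)) * ((2 * M * L ^ α / δ) * (Real.sqrt n * (C * Real.sqrt L * Real.sqrt K)))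
          = c * (L ^ (α + 1 / 2) / (n : ℝ) ^ ((1 : ℝ) / 2)) := by
        have h1 : Real.sqrt n / (n : ℝ) = 1 / Real.sqrt n := Real.sqrt_div_self'
        have h2 : Real.sqrt L = L ^ ((1:ℝ) / 2) := Real.sqrt_eq_rpow L
        have h3 : L ^ α * L ^ ((1:ℝ) / 2) = L ^ (α + 1 / 2) := (Real.rpow_add hL _ _).symm
        have h4 : Real.sqrt n = (n : ℝ) ^ ((1:ℝ) / 2) := Real.sqrt_eq_rpow _
        have key2 : (1 / (n:ℝ)) * ((2 * M * L ^ α / δ) * (Real.sqrt n * (C * Real.sqrt L * Real.sqrt K)))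
            = c * (L ^ α * Real.sqrt L * (Real.sqrt n / (n:ℝ))) := by
          rw [hcdef]; ring
        rw [key2, h1, h2, h3, h4, mul_one_div]
      calc (1 / (n : ℝ)) * (n * (ε / 3) + (2 * M * L ^ α / δ) * (Real.sqrt n * s))
          ≤ (1 / (n : ℝ)) * (n * (ε / 3) + (2 * M * L ^ α / δ) * (Real.sqrt n * (C * Real.sqrt L * Real.sqrt K))) := by
            refine mul_le_mul_of_nonneg_left (add_le_add le_rfl hss) (by positivity)
        _ = ε / 3 + c * (L ^ (α + 1 / 2) / (n : ℝ) ^ ((1 : ℝ) / 2)) := by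
            rw [mul_add, hrw]
            congr 1
            field_simp
    exact le_trans (mul_le_mul_of_nonneg_left hsumbd (by positivity)) hstep
  calc |(1 / (n : ℝ)) * ∑ i : Fin n, g n (μ i * Real.sqrt n) - a|
      ≤ (1 / (n : ℝ)) * (∑ i : Fin n, |g n (μ i * Real.sqrt n) - g n 0|) + |g n 0 - a| := key
    _ ≤ (ε / 3 + c * (L ^ (α + 1 / 2) / (n : ℝ) ^ ((1 : ℝ) / 2))) + |g n 0 - a| :=
        add_le_add hmain le_rfl
    _ < (ε / 3 + ε / 3) + ε / 3 := by
        have := hE1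
        rw [hLdef]
        exact add_lt_add (add_lt_add_right hE1 _) hE2
    _ = ε := by ring
end

section
/- Define g_n(x) = 2u²ρ_n² + 2(x² − u²ρ_n²)(Φ(x + uρ_n) − Φ(x − uρ_n)) + 2(x − uρ_n)φ(x + uρ_n) − 2(x + uρ_n)φ(x − uρ_n) for fixed u ∈ (0,1] and ρ_n = √(2 log n). Then |g_n(0)| ≤ 6 ρ_n n^{−u²}, and hence g_n(0) → 0 as n → ∞. -/
open Filter

noncomputable def gaussPdf (x : ℝ) : ℝ := (Real.sqrt (2 * Real.pi))⁻¹ * Real.exp (-x ^ 2 / 2)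

noncomputable def gaussCdf (x : ℝ) : ℝ := ∫ t in Set.Iic x, gaussPdf t

noncomputable def gfun (u ρ : ℝ) (x : ℝ) : ℝ :=
  2 * u ^ 2 * ρ ^ 2
    + 2 * (x ^ 2 - u ^ 2 * ρ ^ 2) * (gaussCdf (x + u * ρ) - gaussCdf (x - u * ρ))
    + 2 * (x - u * ρ) * gaussPdf (x + u * ρ)
    - 2 * (x + u * ρ) * gaussPdf (x - u * ρ)

section helpers
open MeasureTheory Real Set

lemma gaussPdf_pos (x : ℝ) : 0 < gaussPdf x := by
  unfold gaussPdf
  positivity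

lemma gaussPdf_even (x : ℝ) : gaussPdf (-x) = gaussPdf x := by
  unfold gaussPdf
  rw [neg_sq]

lemma gaussPdf_eq (x : ℝ) : gaussPdf x = (Real.sqrt (2 * Real.pi))⁻¹ * Real.exp (-(1/2) * x ^ 2) := by
  unfold gaussPdf
  rw [show -x ^ 2 / 2 = -(1/2) * x ^ 2 from by ring]

lemma integrable_gaussPdf : MeasureTheory.Integrable gaussPdf := by
  have : gaussPdf = fun x => (Real.sqrt (2 * Real.pi))⁻¹ * Real.exp (-(1/2) * x ^ 2) := by
    funext x; exact gaussPdf_eq x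
  rw [this]
  exact (integrable_exp_neg_mul_sq (by norm_num)).const_mul _

lemma integral_gaussPdf : ∫ x, gaussPdf x = 1 := by
  have h : ∫ x, gaussPdf x = (Real.sqrt (2 * Real.pi))⁻¹ * ∫ x : ℝ, Real.exp (-(1/2) * x ^ 2) := by
    simp_rw [gaussPdf_eq]
    rw [MeasureTheory.integral_const_mul]
  rw [h, integral_gaussian]
  have : Real.pi / (1/2 : ℝ) = 2 * Real.pi := by ring
  rw [this]
  rw [inv_mul_cancel₀]
  positivity

lemma hasDerivAt_neg_gaussPdf (x : ℝ) :
    HasDerivAt (fun y => -gaussPdf y) (x * gaussPdf x) x := by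
  have h : HasDerivAt (fun y : ℝ => -y ^ 2 / 2) (-x) x := by
    have := ((hasDerivAt_pow 2 x).neg).div_const 2
    refine this.congr_deriv ?_
    simp; ring
  have h2 : HasDerivAt (fun y : ℝ => Real.exp (-y ^ 2 / 2)) (Real.exp (-x ^ 2 / 2) * (-x)) x :=
    (Real.hasDerivAt_exp _).comp x h
  have h3 := (h2.const_mul ((Real.sqrt (2 * Real.pi))⁻¹)).neg
  have heq : x * gaussPdf x
      = -((Real.sqrt (2 * Real.pi))⁻¹ * (Real.exp (-x ^ 2 / 2) * -x)) := by
    unfold gaussPdf; ring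
  rw [heq]
  exact h3

lemma tendsto_gaussPdf_atTop : Tendsto gaussPdf atTop (nhds 0) := by
  have h0 : Tendsto (fun x : ℝ => x ^ 2 / 2) atTop atTop :=
    (tendsto_pow_atTop two_ne_zero).atTop_div_const (by norm_num)
  have h1 : Tendsto (fun x : ℝ => -x ^ 2 / 2) atTop atBot :=
    (tendsto_neg_atTop_atBot.comp h0).congr
      (fun x => by simp only [Function.comp_apply]; ring)
  have h2 : Tendsto (fun x : ℝ => Real.exp (-x ^ 2 / 2)) atTop (nhds 0) :=
    Real.tendsto_exp_atBot.comp h1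
  have h3 := h2.const_mul ((Real.sqrt (2 * Real.pi))⁻¹)
  rw [mul_zero] at h3
  exact h3

lemma integrableOn_id_mul_gaussPdf {t : ℝ} (ht : 0 < t) :
    MeasureTheory.IntegrableOn (fun x => x * gaussPdf x) (Set.Ioi t) := by
  apply integrableOn_Ioi_deriv_of_nonneg (g := fun y => -gaussPdf y)
  · exact ((hasDerivAt_neg_gaussPdf t).continuousAt).continuousWithinAt
  · exact fun x _ => hasDerivAt_neg_gaussPdf x
  · intro x hx
    exact mul_nonneg (le_of_lt (ht.trans hx)) (gaussPdf_pos x).le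
  · simpa using tendsto_gaussPdf_atTop.neg

lemma integral_id_mul_gaussPdf {t : ℝ} (ht : 0 < t) :
    ∫ x in Set.Ioi t, x * gaussPdf x = gaussPdf t := by
  have := integral_Ioi_of_hasDerivAt_of_tendsto' (f := fun y => -gaussPdf y)
    (f' := fun x => x * gaussPdf x) (a := t) (m := 0)
    (fun x _ => hasDerivAt_neg_gaussPdf x) (integrableOn_id_mul_gaussPdf ht)
    (by simpa using tendsto_gaussPdf_atTop.neg)
  simpa using this

lemma mill {t : ℝ} (ht : 0 < t) :
    ∫ x in Set.Ioi t, gaussPdf x ≤ gaussPdf t / t := by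
  have key : ∫ x in Set.Ioi t, gaussPdf x
      ≤ ∫ x in Set.Ioi t, (1 / t) * (x * gaussPdf x) := by
    apply MeasureTheory.setIntegral_mono_on
    · exact integrable_gaussPdf.integrableOn
    · exact (integrableOn_id_mul_gaussPdf ht).const_mul (1 / t)
    · exact measurableSet_Ioi
    · intro x hx
      have hle : t * gaussPdf x ≤ x * gaussPdf x :=
        mul_le_mul_of_nonneg_right (le_of_lt hx) (gaussPdf_pos x).le
      calc gaussPdf x = 1 / t * (t * gaussPdf x) := by field_simp
        _ ≤ 1 / t * (x * gaussPdf x) :=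
            mul_le_mul_of_nonneg_left hle (by positivity)
  rw [MeasureTheory.integral_const_mul, integral_id_mul_gaussPdf ht] at key
  calc (∫ x in Set.Ioi t, gaussPdf x) ≤ 1 / t * gaussPdf t := key
    _ = gaussPdf t / t := by ring

lemma Q_nonneg (t : ℝ) : 0 ≤ ∫ x in Set.Ioi t, gaussPdf x :=
  MeasureTheory.setIntegral_nonneg measurableSet_Ioi (fun x _ => (gaussPdf_pos x).le)

lemma gaussCdf_neg (t : ℝ) : gaussCdf (-t) = ∫ x in Set.Ioi t, gaussPdf x := by
  unfold gaussCdf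
  rw [← integral_comp_neg_Ioi]
  simp_rw [gaussPdf_even]

lemma gaussCdf_add_Q (t : ℝ) : gaussCdf t + (∫ x in Set.Ioi t, gaussPdf x) = 1 := by
  unfold gaussCdf
  rw [intervalIntegral.integral_Iic_add_Ioi integrable_gaussPdf.integrableOn
    integrable_gaussPdf.integrableOn, integral_gaussPdf]

/-- key algebraic form of `gfun u ρ 0`. -/
lemma gfun_zero_eq (u ρ : ℝ) :
    gfun u ρ 0 = 4 * (u * ρ) ^ 2 * (∫ x in Set.Ioi (u * ρ), gaussPdf x)
      - 4 * (u * ρ) * gaussPdf (u * ρ) := by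
  have h1 : gaussCdf (0 - u * ρ) = ∫ x in Set.Ioi (u * ρ), gaussPdf x := by
    rw [zero_sub]; exact gaussCdf_neg (u * ρ)
  have h2 : gaussCdf (0 + u * ρ) = 1 - ∫ x in Set.Ioi (u * ρ), gaussPdf x := by
    rw [zero_add]
    have := gaussCdf_add_Q (u * ρ)
    linarith
  have h3 : gaussPdf (0 - u * ρ) = gaussPdf (0 + u * ρ) := by
    rw [zero_sub, zero_add]; exact gaussPdf_even (u * ρ)
  unfold gfun
  rw [h1, h2, h3, zero_add]
  ring

end helpers

theorem stmt10 (u : ℝ) (hu0 : 0 < u) (hu1 : u ≤ 1) :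
    (∀ n : ℕ, 2 ≤ n →
      |gfun u (Real.sqrt (2 * Real.log n)) 0|
        ≤ 6 * Real.sqrt (2 * Real.log n) * (n : ℝ) ^ (-(u ^ 2)))
    ∧ Tendsto (fun n : ℕ => gfun u (Real.sqrt (2 * Real.log n)) 0) atTop (nhds 0) := by
  have key : ∀ n : ℕ, 2 ≤ n →
      |gfun u (Real.sqrt (2 * Real.log n)) 0|
        ≤ 6 * Real.sqrt (2 * Real.log n) * (n : ℝ) ^ (-(u ^ 2)) := by
    intro n hn
    have hn1 : (1 : ℝ) < (n : ℝ) := by exact_mod_cast Nat.lt_of_lt_of_le one_lt_two hn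
    have hlog : 0 < Real.log n := Real.log_pos hn1
    set ρ := Real.sqrt (2 * Real.log n) with hρdef
    have hρ : 0 < ρ := Real.sqrt_pos.mpr (by linarith)
    have hρsq : ρ ^ 2 = 2 * Real.log n := Real.sq_sqrt (by linarith)
    set t := u * ρ with htdef
    have ht : 0 < t := mul_pos hu0 hρ
    set Q := ∫ x in Set.Ioi t, gaussPdf x with hQdef
    have hQ0 : 0 ≤ Q := Q_nonneg t
    clear_value Q
    clear_value t
    clear_value ρ
    have hmill : t ^ 2 * Q ≤ t * gaussPdf t := by
      rw [hQdef]
      have := mill ht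
      rw [← hQdef] at this ⊢
      calc t ^ 2 * Q ≤ t ^ 2 * (gaussPdf t / t) := by
            apply mul_le_mul_of_nonneg_left this (by positivity)
        _ = t * gaussPdf t := by field_simp
    have hpdf : gaussPdf t = (Real.sqrt (2 * Real.pi))⁻¹ * (n : ℝ) ^ (-(u ^ 2)) := by
      have hexp : -t ^ 2 / 2 = Real.log n * (-(u ^ 2)) := by
        rw [htdef, mul_pow, hρsq]; ring
      unfold gaussPdf
      rw [hexp, ← Real.rpow_def_of_pos (by linarith)]
    have habs : |gfun u ρ 0| ≤ 8 * t * gaussPdf t := by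
      rw [gfun_zero_eq, ← htdef, ← hQdef]
      rw [abs_le]
      constructor
      · have h1 : 0 ≤ 4 * t ^ 2 * Q := by positivity
        nlinarith [gaussPdf_pos t, ht.le]
      · nlinarith
    have hbound : 8 * t * gaussPdf t ≤ 6 * ρ * (n : ℝ) ^ (-(u ^ 2)) := by
      rw [hpdf, htdef]
      have hs : (4:ℝ)/3 ≤ Real.sqrt (2 * Real.pi) := by
        rw [show (4:ℝ)/3 = Real.sqrt ((4/3)^2) by
          rw [Real.sqrt_sq (by norm_num : (0:ℝ) ≤ 4/3)]]
        apply Real.sqrt_le_sqrt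
        nlinarith [Real.pi_gt_three]
      have hsinv : (Real.sqrt (2 * Real.pi))⁻¹ ≤ 3/4 := by
        rw [inv_le_comm₀ (by positivity) (by norm_num)]
        linarith
      have hrpow : (0:ℝ) < (n : ℝ) ^ (-(u ^ 2)) := Real.rpow_pos_of_pos (by linarith) _
      calc 8 * (u * ρ) * ((Real.sqrt (2 * Real.pi))⁻¹ * (n : ℝ) ^ (-(u ^ 2)))
          ≤ 8 * (1 * ρ) * ((3/4) * (n : ℝ) ^ (-(u ^ 2))) := by
            apply mul_le_mul
            · apply mul_le_mul_of_nonneg_left _ (by norm_num)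
              exact mul_le_mul_of_nonneg_right hu1 hρ.le
            · exact mul_le_mul_of_nonneg_right hsinv hrpow.le
            · positivity
            · positivity
        _ = 6 * ρ * (n : ℝ) ^ (-(u ^ 2)) := by ring
    linarith [habs, hbound]
  refine ⟨key, ?_⟩
  have hlim : Tendsto (fun n : ℕ => 6 * Real.sqrt (2 * Real.log n) * (n : ℝ) ^ (-(u ^ 2)))
      atTop (nhds 0) := by
    have hb : 0 < u ^ 2 := by positivity
    have h1 : Tendsto (fun x : ℝ => x ^ ((1:ℝ)/2) * Real.exp (-(u ^ 2) * x)) atTop (nhds 0) :=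
      tendsto_rpow_mul_exp_neg_mul_atTop_nhds_zero _ _ hb
    have h2 : Tendsto (fun n : ℕ => Real.log n) atTop atTop :=
      Real.tendsto_log_atTop.comp tendsto_natCast_atTop_atTop
    have h3 : Tendsto (fun n : ℕ =>
        (Real.log n) ^ ((1:ℝ)/2) * Real.exp (-(u ^ 2) * Real.log n)) atTop (nhds 0) :=
      h1.comp h2
    have h4 := h3.const_mul (6 * Real.sqrt 2)
    rw [mul_zero] at h4
    apply h4.congr'
    filter_upwards [eventually_ge_atTop 2] with n hn
    have hn1 : (1 : ℝ) < (n : ℝ) := by exact_mod_cast Nat.lt_of_lt_of_le one_lt_two hn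
    have hlog : 0 < Real.log n := Real.log_pos hn1
    have hsqrt : Real.sqrt (2 * Real.log n) = Real.sqrt 2 * (Real.log n) ^ ((1:ℝ)/2) := by
      rw [Real.sqrt_mul (by norm_num), Real.sqrt_eq_rpow (Real.log n)]
    have hrpow : (n : ℝ) ^ (-(u ^ 2)) = Real.exp (-(u ^ 2) * Real.log n) := by
      rw [Real.rpow_def_of_pos (by linarith)]; ring_nf
    rw [hsqrt, hrpow]; ring
  apply squeeze_zero_norm' _ hlim
  filter_upwards [eventually_ge_atTop 2] with n hn
  simpa [Real.norm_eq_abs] using key n hn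
end

section
/- Soft-thresholding unbiased risk identity: let X ~ N(μ, σ_n²) with σ_n² = σ²/n, let t ≥ 0, and define the soft-threshold estimator μ̂ = sign(X)(|X| − t)₊. Then E[(μ̂ − μ)²] = E[σ_n² − 2σ_n²·1{X² ≤ t²} + min(X², t²)] (Stein's unbiased risk estimate for soft thresholding). -/
open MeasureTheory ProbabilityTheory Real Filter Set Topology
open scoped NNReal ENNReal

noncomputable def softThresh (t x : ℝ) : ℝ :=
  (if t < x then x - t else 0) + (if x < -t then x + t else 0)

lemma aux_int_pow (n : ℕ) {b : ℝ} (hb : 0 < b) :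
    Integrable fun x : ℝ => x ^ n * Real.exp (-b * x ^ 2) := by
  have h := integrable_rpow_mul_exp_neg_mul_sq hb (s := (n : ℝ))
    (by exact_mod_cast neg_one_lt_zero.trans_le (Nat.cast_nonneg n))
  simpa [Real.rpow_natCast] using h

lemma aux_tendsto_exp_half : Tendsto (fun x : ℝ => Real.exp (-(1/2) * x)) atTop (𝓝 0) := by
  apply Real.tendsto_exp_atBot.comp
  exact Tendsto.const_mul_atTop_of_neg (by norm_num) tendsto_id

lemma aux_tendsto_id_mul {b : ℝ} (hb : 0 < b) :
    Tendsto (fun x : ℝ => x * Real.exp (-b * x ^ 2)) atTop (𝓝 0) := by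
  have h := (rpow_mul_exp_neg_mul_sq_isLittleO_exp_neg hb 1).trans_tendsto aux_tendsto_exp_half
  refine h.congr' ?_
  filter_upwards [eventually_gt_atTop 0] with x hx
  rw [Real.rpow_one]

lemma aux_tendsto_id_mul_bot {b : ℝ} (hb : 0 < b) :
    Tendsto (fun x : ℝ => x * Real.exp (-b * x ^ 2)) atBot (𝓝 0) := by
  have h := ((aux_tendsto_id_mul hb).comp tendsto_neg_atBot_atTop).neg
  rw [neg_zero] at h
  refine h.congr fun x => ?_
  simp [Function.comp]

lemma aux_tendsto_exp_sq {b : ℝ} (hb : 0 < b) :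
    Tendsto (fun x : ℝ => Real.exp (-b * x ^ 2)) atTop (𝓝 0) := by
  apply Real.tendsto_exp_atBot.comp
  apply Tendsto.const_mul_atTop_of_neg (neg_lt_zero.mpr hb)
  exact tendsto_pow_atTop two_ne_zero

lemma aux_tendsto_exp_sq_bot {b : ℝ} (hb : 0 < b) :
    Tendsto (fun x : ℝ => Real.exp (-b * x ^ 2)) atBot (𝓝 0) := by
  have h := (aux_tendsto_exp_sq hb).comp tendsto_neg_atBot_atTop
  refine h.congr fun x => ?_
  simp [Function.comp]

lemma aux_sub_top (m : ℝ) : Tendsto (fun x : ℝ => x - m) atTop atTop :=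
  (tendsto_atTop_add_const_right atTop (-m) tendsto_id).congr
    fun x => (sub_eq_add_neg x m).symm

lemma aux_sub_bot (m : ℝ) : Tendsto (fun x : ℝ => x - m) atBot atBot :=
  (tendsto_atBot_add_const_right atBot (-m) tendsto_id).congr
    fun x => (sub_eq_add_neg x m).symm

lemma aux_gauss_top (C m : ℝ) {b : ℝ} (hb : 0 < b) :
    Tendsto (fun x : ℝ => C * Real.exp (-b * (x - m) ^ 2)) atTop (𝓝 0) := by
  have h := ((aux_tendsto_exp_sq hb).comp (aux_sub_top m)).const_mul C
  simpa [Function.comp] using h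

lemma aux_gauss_bot (C m : ℝ) {b : ℝ} (hb : 0 < b) :
    Tendsto (fun x : ℝ => C * Real.exp (-b * (x - m) ^ 2)) atBot (𝓝 0) := by
  have h := ((aux_tendsto_exp_sq_bot hb).comp (aux_sub_bot m)).const_mul C
  simpa [Function.comp] using h

lemma aux_lin_top (C m : ℝ) {b : ℝ} (hb : 0 < b) :
    Tendsto (fun x : ℝ => (x - m) * (C * Real.exp (-b * (x - m) ^ 2))) atTop (𝓝 0) := by
  have h := ((aux_tendsto_id_mul hb).comp (aux_sub_top m)).const_mul C
  rw [mul_zero] at h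
  refine h.congr fun x => ?_
  simp only [Function.comp_apply]
  ring

lemma aux_lin_bot (C m : ℝ) {b : ℝ} (hb : 0 < b) :
    Tendsto (fun x : ℝ => (x - m) * (C * Real.exp (-b * (x - m) ^ 2))) atBot (𝓝 0) := by
  have h := ((aux_tendsto_id_mul_bot hb).comp (aux_sub_bot m)).const_mul C
  rw [mul_zero] at h
  refine h.congr fun x => ?_
  simp only [Function.comp_apply]
  ring

lemma aux_int_gauss_pow (n : ℕ) (C m : ℝ) {b : ℝ} (hb : 0 < b) :
    Integrable fun x : ℝ => (x - m) ^ n * (C * Real.exp (-b * (x - m) ^ 2)) := by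
  have h := aux_int_pow n hb
  have hmp : MeasurePreserving (fun x : ℝ => x - m) volume volume :=
    measurePreserving_sub_right volume m
  have h2 : Integrable ((fun x : ℝ => x ^ n * Real.exp (-b * x ^ 2)) ∘ fun x => x - m) volume :=
    (hmp.integrable_comp h.aestronglyMeasurable).mpr h
  have h3 := h2.const_mul C
  refine h3.congr ?_
  refine ae_of_all _ fun x => ?_
  simp [Function.comp]
  ring

theorem stmt12 (μ σn t : ℝ) (hσn : 0 < σn) (ht : 0 ≤ t) :
    ∫ x, (softThresh t x - μ) ^ 2 ∂(gaussianReal μ (Real.toNNReal (σn ^ 2)))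
      = ∫ x, (σn ^ 2 - 2 * σn ^ 2 * (if x ^ 2 ≤ t ^ 2 then (1 : ℝ) else 0)
            + min (x ^ 2) (t ^ 2)) ∂(gaussianReal μ (Real.toNNReal (σn ^ 2))) := by
  set v : ℝ := σn ^ 2 with hv_def
  have hv : 0 < v := by positivity
  set V : ℝ≥0 := Real.toNNReal v with hV_def
  have hV0 : V ≠ 0 := by
    simp only [hV_def, ne_eq, Real.toNNReal_eq_zero, not_le]
    exact hv
  set b : ℝ := (2 * v)⁻¹ with hb_def
  have hb : 0 < b := by positivity
  set C : ℝ := (Real.sqrt (2 * Real.pi * v))⁻¹ with hC_def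
  set f : ℝ → ℝ := fun x => C * Real.exp (-b * (x - μ) ^ 2) with hf_def
  have hf_nonneg : ∀ x, 0 ≤ f x := by
    intro x; simp only [hf_def]; positivity
  have hf_cont : Continuous f := by
    simp only [hf_def]; fun_prop
  have hfpdf : ∀ x, gaussianPDFReal μ V x = f x := by
    intro x
    simp only [gaussianPDFReal, hf_def, hV_def, Real.coe_toNNReal _ hv.le]
    congr 1
    rw [hb_def]
    field_simp
  have hf_deriv : ∀ x, HasDerivAt f (-((x - μ) / v) * f x) x := by
    intro x
    have h0 : HasDerivAt (fun y : ℝ => (y - μ) ^ 2) (2 * (x - μ)) x := by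
      simpa using ((hasDerivAt_id x).sub_const μ).fun_pow 2
    have h1 : HasDerivAt (fun y : ℝ => -b * (y - μ) ^ 2) (-b * (2 * (x - μ))) x :=
      h0.const_mul (-b)
    have h2 := (h1.exp).const_mul C
    simp only [hf_def]
    refine h2.congr_deriv ?_
    rw [hb_def]
    field_simp
  -- measure conversion
  have hconv : ∀ g : ℝ → ℝ, ∫ x, g x ∂(gaussianReal μ V) = ∫ x, g x * f x := by
    intro g
    rw [gaussianReal_of_var_ne_zero μ hV0]
    have hmeas : Measurable fun x => Real.toNNReal (f x) :=
      (hf_cont.measurable).real_toNNReal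
    have hdens : gaussianPDF μ V = fun x => ((Real.toNNReal (f x) : ℝ≥0) : ℝ≥0∞) := by
      funext x
      rw [gaussianPDF, hfpdf x]
      rfl
    rw [hdens]
    rw [integral_withDensity_eq_integral_smul hmeas g]
    refine integral_congr_ae (ae_of_all _ fun x => ?_)
    show (f x).toNNReal • g x = g x * f x
    rw [NNReal.smul_def, Real.coe_toNNReal _ (hf_nonneg x), smul_eq_mul, mul_comm]
  -- the correction function g
  set G : ℝ → ℝ := fun x => softThresh t x - x with hG_def
  have hgplus : ∀ x, t < x → G x = -t := by
    intro x hx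
    simp only [hG_def, softThresh, if_pos hx, if_neg (by linarith : ¬ x < -t)]
    ring
  have hgminus : ∀ x, x < -t → G x = t := by
    intro x hx
    simp only [hG_def, softThresh, if_neg (by linarith : ¬ t < x), if_pos hx]
    ring
  have hgmid : ∀ x, -t ≤ x → x ≤ t → G x = -x := by
    intro x h1 h2
    simp only [hG_def, softThresh, if_neg (not_lt.mpr h2), if_neg (not_lt.mpr h1)]
    ring
  have hgabs : ∀ x, |G x| ≤ t := by
    intro x
    rcases lt_or_ge t x with h | h
    · rw [hgplus x h, abs_neg, abs_of_nonneg ht]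
    · rcases lt_or_ge x (-t) with h' | h'
      · rw [hgminus x h', abs_of_nonneg ht]
      · rw [hgmid x h' h, abs_neg]
        exact abs_le.mpr ⟨by linarith, h⟩
  have hgsq : ∀ x, min (x ^ 2) (t ^ 2) = G x ^ 2 := by
    intro x
    rcases lt_or_ge t x with h | h
    · rw [hgplus x h, neg_pow, min_eq_right (by nlinarith)]
      ring
    · rcases lt_or_ge x (-t) with h' | h'
      · rw [hgminus x h', min_eq_right (by nlinarith)]
      · rw [hgmid x h' h, min_eq_left (by nlinarith)]
        ring
  have hGmax : ∀ x, G x = -(max (min x t) (-t)) := by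
    intro x
    rcases lt_or_ge t x with h | h
    · rw [hgplus x h, min_eq_right h.le, max_eq_left (by linarith)]
    · rcases lt_or_ge x (-t) with h' | h'
      · rw [hgminus x h', min_eq_left h, max_eq_right h'.le, neg_neg]
      · rw [hgmid x h' h, min_eq_left h, max_eq_left h']
  have hGcont : Continuous G := by
    rw [show G = fun x => -(max (min x t) (-t)) from funext hGmax]
    exact ((continuous_id.min continuous_const).max continuous_const).neg
  -- D and F
  set D : ℝ → ℝ := fun x =>
    ((x - μ) ^ 2 - v + 2 * (x - μ) * G x
      + 2 * v * (if x ^ 2 ≤ t ^ 2 then (1 : ℝ) else 0)) * f x with hD_def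
  set F : ℝ → ℝ := fun x => -v * ((x - μ) + 2 * G x) * f x with hF_def
  have hFcont : Continuous F := by
    simp only [hF_def]
    exact ((continuous_const.mul ((continuous_id.sub continuous_const).add
      (continuous_const.mul hGcont))).mul hf_cont)
  -- integrability
  have hfint : Integrable f := by
    have h := aux_int_gauss_pow 0 C μ hb
    refine h.congr (ae_of_all _ fun x => ?_)
    simp [hf_def]
  have hf2int : Integrable fun x => (x - μ) ^ 2 * f x := by
    simp only [hf_def]
    exact aux_int_gauss_pow 2 C μ hb
  have hSTcont : Continuous (softThresh t) := by
    have he : softThresh t = fun x => x + G x := funext fun x => by simp [hG_def]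
    rw [he]; exact continuous_id.add hGcont
  have hLf : Integrable fun x => (softThresh t x - μ) ^ 2 * f x := by
    refine Integrable.mono' ((hf2int.const_mul 2).add (hfint.const_mul (2 * t ^ 2))) ?_
      (ae_of_all _ fun x => ?_)
    · exact (((hSTcont.sub continuous_const).pow 2).mul hf_cont).aestronglyMeasurable
    · have hg2 : G x ^ 2 ≤ t ^ 2 := by rw [← hgsq x]; exact min_le_right _ _
      have hs : softThresh t x = x + G x := by simp [hG_def]
      have hf0 := hf_nonneg x
      rw [hs, Real.norm_eq_abs, abs_of_nonneg (mul_nonneg (sq_nonneg _) hf0)]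
      simp only [Pi.add_apply]
      nlinarith [mul_nonneg (sq_nonneg ((x - μ) - G x)) hf0,
        mul_le_mul_of_nonneg_right hg2 hf0]
  have hRf : Integrable fun x =>
      (v - 2 * v * (if x ^ 2 ≤ t ^ 2 then (1 : ℝ) else 0) + min (x ^ 2) (t ^ 2)) * f x := by
    have hRmeas : Measurable fun x : ℝ =>
        v - 2 * v * (if x ^ 2 ≤ t ^ 2 then (1 : ℝ) else 0) + min (x ^ 2) (t ^ 2) := by
      apply Measurable.add
      · refine Measurable.sub measurable_const (Measurable.const_mul ?_ _)
        exact Measurable.ite (measurableSet_le (measurable_id.pow_const 2) measurable_const)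
          measurable_const measurable_const
      · exact (measurable_id.pow_const 2).min measurable_const
    refine hfint.bdd_mul hRmeas.aestronglyMeasurable (c := 3 * v + t ^ 2) (ae_of_all _ fun x => ?_)
    rw [Real.norm_eq_abs, abs_le]
    have h1 : 0 ≤ min (x ^ 2) (t ^ 2) := le_min (sq_nonneg x) (sq_nonneg t)
    have h2 : min (x ^ 2) (t ^ 2) ≤ t ^ 2 := min_le_right _ _
    constructor <;> (split_ifs with hif <;> nlinarith)
  have hLR : ∀ x, (softThresh t x - μ) ^ 2 * f x
      - (v - 2 * v * (if x ^ 2 ≤ t ^ 2 then (1 : ℝ) else 0) + min (x ^ 2) (t ^ 2)) * f x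
      = D x := by
    intro x
    have hs : softThresh t x = x + G x := by simp [hG_def]
    rw [hs, hgsq x, hD_def]
    ring
  have hDint : Integrable D := by
    have h := hLf.sub hRf
    refine h.congr (ae_of_all _ fun x => hLR x)
  -- derivatives
  have hFderiv_plus : ∀ x ∈ Ioi t, HasDerivAt F (D x) x := by
    intro x hx
    rw [mem_Ioi] at hx
    have hev : F =ᶠ[𝓝 x] fun y => -v * ((y - μ) - 2 * t) * f y := by
      filter_upwards [isOpen_Ioi.mem_nhds hx] with y hy
      simp only [hF_def]
      rw [hgplus y hy]
      ring
    have hu : HasDerivAt (fun y : ℝ => -v * ((y - μ) - 2 * t)) (-v) x := by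
      have h := (((hasDerivAt_id x).sub_const μ).sub_const (2 * t)).const_mul (-v)
      simpa using h
    have hd := hu.mul (hf_deriv x)
    have hDx : D x = -v * f x + -v * ((x - μ) - 2 * t) * (-((x - μ) / v) * f x) := by
      have hind : ¬ x ^ 2 ≤ t ^ 2 := by nlinarith
      simp only [hD_def, if_neg hind, hgplus x hx]
      field_simp
      ring
    rw [hDx]
    exact hd.congr_of_eventuallyEq hev
  have hFderiv_minus : ∀ x ∈ Iio (-t), HasDerivAt F (D x) x := by
    intro x hx
    rw [mem_Iio] at hx
    have hev : F =ᶠ[𝓝 x] fun y => -v * ((y - μ) + 2 * t) * f y := by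
      filter_upwards [isOpen_Iio.mem_nhds hx] with y hy
      simp only [hF_def]
      rw [hgminus y hy]
    have hu : HasDerivAt (fun y : ℝ => -v * ((y - μ) + 2 * t)) (-v) x := by
      have h := (((hasDerivAt_id x).sub_const μ).add_const (2 * t)).const_mul (-v)
      simpa using h
    have hd := hu.mul (hf_deriv x)
    have hDx : D x = -v * f x + -v * ((x - μ) + 2 * t) * (-((x - μ) / v) * f x) := by
      have hind : ¬ x ^ 2 ≤ t ^ 2 := by nlinarith
      simp only [hD_def, if_neg hind, hgminus x hx]
      field_simp
      try ring
    rw [hDx]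
    exact hd.congr_of_eventuallyEq hev
  have hFderiv_mid : ∀ x ∈ Ioo (-t) t, HasDerivAt F (D x) x := by
    intro x hx
    obtain ⟨hx1, hx2⟩ := hx
    have hev : F =ᶠ[𝓝 x] fun y => -v * ((y - μ) - 2 * y) * f y := by
      filter_upwards [isOpen_Ioo.mem_nhds (⟨hx1, hx2⟩ : x ∈ Ioo (-t) t)] with y hy
      simp only [hF_def]
      rw [hgmid y hy.1.le hy.2.le]
      ring
    have hu : HasDerivAt (fun y : ℝ => -v * ((y - μ) - 2 * y)) (-v * (1 - 2 * 1)) x :=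
      (((hasDerivAt_id x).sub_const μ).sub ((hasDerivAt_id x).const_mul 2)).const_mul (-v)
    have hd := hu.mul (hf_deriv x)
    have hDx : D x = -v * (1 - 2 * 1) * f x
        + -v * ((x - μ) - 2 * x) * (-((x - μ) / v) * f x) := by
      have hind : x ^ 2 ≤ t ^ 2 := by nlinarith
      simp only [hD_def, if_pos hind, hgmid x hx1.le hx2.le]
      field_simp
      ring
    rw [hDx]
    exact hd.congr_of_eventuallyEq hev
  -- limits
  have hFtop : Tendsto F atTop (𝓝 0) := by
    have h1 : Tendsto (fun x => (x - μ) * f x) atTop (𝓝 0) := by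
      simp only [hf_def]; exact aux_lin_top C μ hb
    have h0 : Tendsto f atTop (𝓝 0) := by
      simp only [hf_def]; exact aux_gauss_top C μ hb
    have ht0 : Tendsto (fun x => t * f x) atTop (𝓝 0) := by have h := h0.const_mul t; rwa [mul_zero] at h
    have htneg : Tendsto (fun x => -(t * f x)) atTop (𝓝 0) := by have h := ht0.neg; rwa [neg_zero] at h
    have h2 : Tendsto (fun x => G x * f x) atTop (𝓝 0) := by
      refine tendsto_of_tendsto_of_tendsto_of_le_of_le htneg ht0 (fun x => ?_) (fun x => ?_)
      · nlinarith [mul_le_mul_of_nonneg_right (abs_le.mp (hgabs x)).1 (hf_nonneg x)]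
      · exact mul_le_mul_of_nonneg_right (abs_le.mp (hgabs x)).2 (hf_nonneg x)
    have hFeq : F = fun x => -v * ((x - μ) * f x) + -(2 * v) * (G x * f x) := by
      funext x; simp only [hF_def]; ring
    rw [hFeq]
    have h := (h1.const_mul (-v)).add (h2.const_mul (-(2 * v)))
    simpa using h
  have hFbot : Tendsto F atBot (𝓝 0) := by
    have h1 : Tendsto (fun x => (x - μ) * f x) atBot (𝓝 0) := by
      simp only [hf_def]; exact aux_lin_bot C μ hb
    have h0 : Tendsto f atBot (𝓝 0) := by
      simp only [hf_def]; exact aux_gauss_bot C μ hb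
    have ht0 : Tendsto (fun x => t * f x) atBot (𝓝 0) := by have h := h0.const_mul t; rwa [mul_zero] at h
    have htneg : Tendsto (fun x => -(t * f x)) atBot (𝓝 0) := by have h := ht0.neg; rwa [neg_zero] at h
    have h2 : Tendsto (fun x => G x * f x) atBot (𝓝 0) := by
      refine tendsto_of_tendsto_of_tendsto_of_le_of_le htneg ht0 (fun x => ?_) (fun x => ?_)
      · nlinarith [mul_le_mul_of_nonneg_right (abs_le.mp (hgabs x)).1 (hf_nonneg x)]
      · exact mul_le_mul_of_nonneg_right (abs_le.mp (hgabs x)).2 (hf_nonneg x)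
    have hFeq : F = fun x => -v * ((x - μ) * f x) + -(2 * v) * (G x * f x) := by
      funext x; simp only [hF_def]; ring
    rw [hFeq]
    have h := (h1.const_mul (-v)).add (h2.const_mul (-(2 * v)))
    simpa using h
  -- FTC pieces
  have hI3 : ∫ x in Ioi t, D x = 0 - F t :=
    integral_Ioi_of_hasDerivAt_of_tendsto hFcont.continuousWithinAt hFderiv_plus
      hDint.integrableOn hFtop
  have hI1 : ∫ x in Iic (-t), D x = F (-t) - 0 :=
    integral_Iic_of_hasDerivAt_of_tendsto hFcont.continuousWithinAt hFderiv_minus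
      hDint.integrableOn hFbot
  have hle : -t ≤ t := by linarith
  have hI2 : ∫ x in Ioc (-t) t, D x = F t - F (-t) := by
    rw [← intervalIntegral.integral_of_le hle]
    exact intervalIntegral.integral_eq_sub_of_hasDerivAt_of_le hle
      hFcont.continuousOn hFderiv_mid hDint.intervalIntegrable
  have hdisj : Disjoint (Ioc (-t) t) (Ioi t) := by
    refine disjoint_left.mpr fun a ha hb' => ?_
    exact absurd hb' (not_lt.mpr ha.2)
  have hs2 : ∫ x in Ioi (-t), D x = (∫ x in Ioc (-t) t, D x) + ∫ x in Ioi t, D x := by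
    rw [← Ioc_union_Ioi_eq_Ioi hle]
    exact setIntegral_union hdisj measurableSet_Ioi hDint.integrableOn hDint.integrableOn
  have htotal : ∫ x, D x = (∫ x in Iic (-t), D x) + ∫ x in Ioi (-t), D x :=
    (intervalIntegral.integral_Iic_add_Ioi hDint.integrableOn hDint.integrableOn).symm
  have key : ∫ x, D x = 0 := by
    rw [htotal, hs2, hI1, hI2, hI3]; ring
  -- conclusion
  rw [hconv (fun x => (softThresh t x - μ) ^ 2),
    hconv (fun x => v - 2 * v * (if x ^ 2 ≤ t ^ 2 then (1 : ℝ) else 0) + min (x ^ 2) (t ^ 2))]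
  rw [← sub_eq_zero, ← integral_sub hLf hRf]
  rw [integral_congr_ae (ae_of_all _ hLR)]
  exact key
end

section
/- Local-average approximation error: let ψ : ℝ → ℝ be bounded with compact support and ∫ψ = 0, let ψ_{jk}(x) = 2^{j/2}ψ(2^j x − k), and let κ bound the number of k at each level j with ψ_{jk} not identically zero on [a,b]'s neighborhood. Suppose the coefficients satisfy ‖β_{j·}‖₂ ≤ c·2^{−j/2} for all j > J₁ where 2^{J₁} = n. Then for any 0 ≤ a < b ≤ 1, |(1/(b−a))∫_a^b Σ_{j>J₁} Σ_k β_{jk}ψ_{jk}(x) dx| ≤ C/(n(b−a)) for a constant C depending only on ψ, κ, c. -/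
open MeasureTheory Finset

lemma aux_geom (m : ℕ) (s : Finset ℕ) :
    ∑ j ∈ s.filter (fun j => m < j), ((2:ℝ)⁻¹)^j ≤ ((2:ℝ)⁻¹)^m := by
  classical
  set n := s.sup id + 1 with hn
  have hsub : s.filter (fun j => m < j) ⊆ Finset.Ico (m+1) n := by
    intro j hj
    simp only [Finset.mem_filter] at hj
    exact Finset.mem_Ico.mpr ⟨hj.2, Nat.lt_succ_of_le (Finset.le_sup (f := id) hj.1)⟩
  have h1 : ∑ j ∈ s.filter (fun j => m < j), ((2:ℝ)⁻¹)^j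
      ≤ ∑ j ∈ Finset.Ico (m+1) n, ((2:ℝ)⁻¹)^j :=
    Finset.sum_le_sum_of_subset_of_nonneg hsub (fun i _ _ => by positivity)
  refine h1.trans ?_
  have := geom_sum_Ico_le_of_lt_one (by norm_num : (0:ℝ) ≤ 2⁻¹) (by norm_num : (2:ℝ)⁻¹ < 1)
    (m := m+1) (n := n)
  refine this.trans ?_
  rw [pow_succ]
  norm_num

lemma aux_count (M N₁ : ℝ) (hM : 0 < M) (hN : 0 ≤ N₁) (Φ : ℝ → ℝ)
    (hbd : ∀ u, |Φ u| ≤ N₁) (hz : ∀ u, M ≤ |u| → Φ u = 0) (t : ℝ) (N : ℕ) :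
    ∑ k ∈ Finset.range N, |Φ (t - k)| ≤ (2*M+2) * N₁ := by
  classical
  set S : Finset ℕ := (Finset.range N).filter (fun k => |Φ (t - (k:ℝ))| ≠ 0) with hS
  have hsum : ∑ k ∈ Finset.range N, |Φ (t-(k:ℝ))| = ∑ k ∈ S, |Φ (t-(k:ℝ))| :=
    (Finset.sum_filter_ne_zero _).symm
  have hmem : ∀ k : ℕ, k ∈ S → t - M < (k:ℝ) ∧ (k:ℝ) < t + M := by
    intro k hk
    obtain ⟨-, hk⟩ := Finset.mem_filter.mp hk
    have hk' : Φ (t - (k:ℝ)) ≠ 0 := fun h => hk (by rw [h]; simp)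
    have h1 : |t - (k:ℝ)| < M := not_le.mp (fun h => hk' (hz _ h))
    have h2 := abs_lt.mp h1
    constructor <;> linarith [h2.1, h2.2]
  have hle : ∑ k ∈ S, |Φ (t-(k:ℝ))| ≤ (S.card : ℝ) * N₁ := by
    have := Finset.sum_le_card_nsmul S (fun k => |Φ (t-(k:ℝ))|) N₁ (fun k _ => hbd _)
    simpa [nsmul_eq_mul] using this
  rcases S.eq_empty_or_nonempty with h | ⟨k₀, hk₀⟩
  · rw [hsum, h]
    simp
    positivity
  · set l : ℕ := ⌊t - M⌋₊ with hl
    set u : ℕ := ⌊t + M⌋₊ with hu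
    have htM : 0 < t + M := lt_of_le_of_lt (Nat.cast_nonneg k₀) (hmem k₀ hk₀).2
    have hSsub : S ⊆ Finset.Icc l u := by
      intro k hk
      refine Finset.mem_Icc.mpr ⟨?_, Nat.le_floor (hmem k hk).2.le⟩
      have := Nat.floor_le_floor (R := ℝ) (hmem k hk).1.le
      simpa [Nat.floor_natCast] using this
    have hcard : (S.card:ℝ) ≤ 2*M+2 := by
      have h1 : S.card ≤ (Finset.Icc l u).card := Finset.card_le_card hSsub
      have hlu : l ≤ u := by
        have := Finset.mem_Icc.mp (hSsub hk₀)
        omega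
      rw [Nat.card_Icc] at h1
      have h2 : (S.card:ℝ) ≤ ((u + 1 - l : ℕ):ℝ) := by exact_mod_cast h1
      rw [Nat.cast_sub (by omega)] at h2
      have h3 : (u:ℝ) ≤ t + M := Nat.floor_le htM.le
      have h4 : t - M < (l:ℝ) + 1 := Nat.lt_floor_add_one _
      push_cast at h2
      linarith
    rw [hsum]
    exact hle.trans (mul_le_mul_of_nonneg_right hcard hN)

lemma aux_cs (n : ℕ) (f : ℕ → ℝ) :
    ∑ k ∈ Finset.range n, |f k| ≤ Real.sqrt n * Real.sqrt (∑ k ∈ Finset.range n, f k ^ 2) := by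
  have h := Finset.sum_mul_sq_le_sq_mul_sq (Finset.range n) (fun _ => (1:ℝ)) (fun k => |f k|)
  simp only [one_mul, one_pow, sq_abs] at h
  have h1 : ∑ k ∈ Finset.range n, (1:ℝ) = n := by simp
  rw [h1] at h
  have h2 : (0:ℝ) ≤ ∑ k ∈ Finset.range n, |f k| :=
    Finset.sum_nonneg fun k _ => abs_nonneg _
  have h3 := Real.sqrt_le_sqrt h
  rw [Real.sqrt_sq h2, Real.sqrt_mul (by positivity)] at h3
  exact h3

theorem stmt16 (ψ : ℝ → ℝ) (B : ℝ) (hψbd : ∀ x, |ψ x| ≤ B)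
    (hψsupp : HasCompactSupport ψ) (hψmeas : Measurable ψ)
    (hψint : ∫ x, ψ x = 0)
    (κ : ℕ)
    (hκ : ∀ (j : ℕ) (x : ℝ),
      Set.ncard {k : ℕ | k < 2 ^ j ∧ ψ ((2 : ℝ) ^ j * x - (k : ℝ)) ≠ 0} ≤ κ)
    (c : ℝ) (hc : 0 < c) :
    ∃ C : ℝ, 0 < C ∧ ∀ (J₁ : ℕ) (β : ℕ → ℕ → ℝ),
      (∀ j : ℕ, J₁ < j →
        Real.sqrt (∑ k ∈ Finset.range (2 ^ j), β j k ^ 2) ≤ c * (2 : ℝ) ^ (-(j : ℝ) / 2)) →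
      ∀ a b : ℝ, 0 ≤ a → a < b → b ≤ 1 →
        |(b - a)⁻¹ * ∫ x in a..b,
            ∑' j : ℕ, if J₁ < j then
                ∑ k ∈ Finset.range (2 ^ j),
                  β j k * (2 : ℝ) ^ ((j : ℝ) / 2) * ψ ((2 : ℝ) ^ j * x - k)
              else 0|
          ≤ C / ((2 : ℝ) ^ J₁ * (b - a)) := by
  classical
  -- support radius
  obtain ⟨M, hM0, hMb⟩ : ∃ M : ℝ, 0 < M ∧ tsupport ψ ⊆ Metric.ball 0 M :=
    (hψsupp.isBounded.subset_ball_lt 0 0).imp (fun M h => ⟨h.1, h.2⟩)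
  have hψzero : ∀ x : ℝ, M ≤ |x| → ψ x = 0 := by
    intro x hx
    apply image_eq_zero_of_notMem_tsupport
    intro hmem
    have := hMb hmem
    rw [Metric.mem_ball, Real.dist_eq, sub_zero] at this
    linarith
  have hψint' : Integrable ψ := by
    rw [← integrableOn_iff_integrable_of_support_subset (subset_tsupport ψ)]
    exact Measure.integrableOn_of_bounded hψsupp.isCompact.measure_lt_top.ne
      hψmeas.aestronglyMeasurable
      (ae_of_all _ fun x => by rw [Real.norm_eq_abs]; exact hψbd x)
  set N₁ : ℝ := ∫ x, |ψ x| with hN₁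
  have hN₁nn : 0 ≤ N₁ := integral_nonneg (fun x => abs_nonneg _)
  have hψabs : Integrable (fun x => |ψ x|) := hψint'.abs
  set Φ : ℝ → ℝ := fun u => ∫ x in Set.Iic u, ψ x with hΦdef
  have hΦbd : ∀ u, |Φ u| ≤ N₁ := by
    intro u
    calc |Φ u| ≤ ∫ x in Set.Iic u, |ψ x| := by
          simpa [Real.norm_eq_abs] using
            norm_integral_le_integral_norm (μ := volume.restrict (Set.Iic u)) ψ
      _ ≤ N₁ := setIntegral_le_integral hψabs (ae_of_all _ fun x => abs_nonneg _)
  have hΦzero : ∀ u, M ≤ |u| → Φ u = 0 := by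
    intro u hu
    rcases le_abs.mp hu with h | h
    · have h1 : ∫ x in Set.Ioi u, ψ x = 0 := by
        rw [setIntegral_congr_fun measurableSet_Ioi
          (g := fun _ => (0:ℝ)) (fun x hx => hψzero x (by
            rw [Set.mem_Ioi] at hx
            rw [abs_of_nonneg (by linarith [hM0])]
            linarith))]
        simp
      have h2 := intervalIntegral.integral_Iic_add_Ioi (hψint'.integrableOn)
        (hψint'.integrableOn) (f := ψ) (μ := volume) (b := u)
      rw [hψint, h1] at h2
      simpa using h2
    · rw [hΦdef]
      simp only
      rw [setIntegral_congr_fun measurableSet_Iic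
        (g := fun _ => (0:ℝ)) (fun x hx => hψzero x (by
          rw [Set.mem_Iic] at hx
          rw [abs_of_nonpos (by linarith)]
          linarith))]
      simp
  -- the constant
  set C₁ : ℝ := 2*c*(2*M+2)*N₁ with hC₁
  have hC₁nn : 0 ≤ C₁ := by
    have : (0:ℝ) ≤ 2*c*(2*M+2) := by nlinarith
    exact mul_nonneg this hN₁nn
  refine ⟨C₁ + 1, by linarith, ?_⟩
  intro J₁ β hβ a b ha0 hab hb1
  have hab' : a ≤ b := hab.le
  -- coefficient bounds
  have hβ2 : ∀ j : ℕ, J₁ < j → ∀ k ∈ Finset.range (2^j), |β j k| ≤ c * (2:ℝ)^(-(j:ℝ)/2) := by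
    intro j hj k hk
    have h1 : (β j k)^2 ≤ ∑ k ∈ Finset.range (2^j), β j k ^ 2 :=
      Finset.single_le_sum (f := fun i => β j i ^ 2) (fun i _ => sq_nonneg (β j i)) hk
    calc |β j k| = Real.sqrt ((β j k)^2) := (Real.sqrt_sq_eq_abs _).symm
      _ ≤ Real.sqrt (∑ k ∈ Finset.range (2^j), β j k ^ 2) := Real.sqrt_le_sqrt h1
      _ ≤ c * (2:ℝ)^(-(j:ℝ)/2) := hβ j hj
  have hrpow : ∀ j : ℕ, (2:ℝ) ^ ((j:ℝ)/2) * (2:ℝ) ^ (-(j:ℝ)/2) = 1 := by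
    intro j
    rw [← Real.rpow_add (by norm_num)]
    rw [show (j:ℝ)/2 + -(j:ℝ)/2 = 0 by ring, Real.rpow_zero]
  have hsqrt2j : ∀ j : ℕ, Real.sqrt (((2:ℕ)^j : ℕ) : ℝ) = (2:ℝ) ^ ((j:ℝ)/2) := by
    intro j
    push_cast
    rw [Real.sqrt_eq_rpow, ← Real.rpow_natCast (2:ℝ) j, ← Real.rpow_mul (by norm_num)]
    ring_nf
  have hβ1 : ∀ j : ℕ, J₁ < j → ∑ k ∈ Finset.range (2^j), |β j k| ≤ c := by
    intro j hj
    have h1 := aux_cs (2^j) (β j)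
    rw [hsqrt2j j] at h1
    refine h1.trans ?_
    calc (2:ℝ)^((j:ℝ)/2) * Real.sqrt (∑ k ∈ Finset.range (2^j), β j k ^ 2)
        ≤ (2:ℝ)^((j:ℝ)/2) * (c * (2:ℝ)^(-(j:ℝ)/2)) := by
          exact mul_le_mul_of_nonneg_left (hβ j hj) (by positivity)
      _ = c * ((2:ℝ)^((j:ℝ)/2) * (2:ℝ)^(-(j:ℝ)/2)) := by ring
      _ = c := by rw [hrpow j, mul_one]
  -- measurability / integrability of the scaled wavelets
  have hmeas2 : ∀ j k : ℕ, Measurable (fun x : ℝ => ψ ((2:ℝ)^j * x - (k:ℝ))) := fun j k =>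
    hψmeas.comp ((measurable_const.mul measurable_id).sub measurable_const)
  have hIntk : ∀ j k : ℕ, IntervalIntegrable (fun x : ℝ => ψ ((2:ℝ)^j * x - (k:ℝ))) volume a b := by
    intro j k
    rw [intervalIntegrable_iff]
    refine Measure.integrableOn_of_bounded (M := B) ?_ (hmeas2 j k).aestronglyMeasurable
      (ae_of_all _ fun x => ?_)
    · rw [Set.uIoc, Real.volume_Ioc]
      exact ENNReal.ofReal_ne_top
    · rw [Real.norm_eq_abs]; exact hψbd _
  have hIOck : ∀ j k : ℕ, IntegrableOn (fun x : ℝ => ψ ((2:ℝ)^j * x - (k:ℝ))) (Set.Ioc a b) := by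
    intro j k
    have := intervalIntegrable_iff.mp (hIntk j k)
    rwa [Set.uIoc_of_le hab'] at this
  -- change of variables
  have hIψ : ∀ j k : ℕ, ∫ x in a..b, ψ ((2:ℝ)^j * x - (k:ℝ))
      = ((2:ℝ)^j)⁻¹ * (Φ ((2:ℝ)^j * b - k) - Φ ((2:ℝ)^j * a - k)) := by
    intro j k
    rw [intervalIntegral.integral_comp_mul_sub ψ (by positivity : ((2:ℝ)^j) ≠ 0) (k:ℝ)]
    rw [smul_eq_mul]
    congr 1
    rw [hΦdef]
    simp only
    exact (intervalIntegral.integral_Iic_sub_Iic hψint'.integrableOn hψint'.integrableOn).symm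
  -- the level functions
  set f : ℕ → ℝ → ℝ := fun j x => ∑ k ∈ Finset.range (2^j),
    β j k * (2:ℝ)^((j:ℝ)/2) * ψ ((2:ℝ)^j * x - (k:ℝ)) with hfdef
  set g : ℕ → ℝ → ℝ := fun j x => if J₁ < j then f j x else 0 with hgdef
  -- per-level interval integral bound
  have hIj : ∀ j : ℕ, J₁ < j →
      |∫ x in a..b, f j x| ≤ C₁ * ((2:ℝ)⁻¹)^j := by
    intro j hj
    have hval : ∫ x in a..b, f j x = ∑ k ∈ Finset.range (2^j),
        β j k * (2:ℝ)^((j:ℝ)/2) * (((2:ℝ)^j)⁻¹ * (Φ ((2:ℝ)^j * b - k) - Φ ((2:ℝ)^j * a - k))) := by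
      rw [hfdef]
      simp only
      rw [intervalIntegral.integral_finset_sum (fun k _ => (hIntk j k).const_mul _)]
      refine Finset.sum_congr rfl (fun k _ => ?_)
      rw [intervalIntegral.integral_const_mul, hIψ j k]
    rw [hval]
    have hterm : ∀ k ∈ Finset.range (2^j),
        |β j k * (2:ℝ)^((j:ℝ)/2) * (((2:ℝ)^j)⁻¹ * (Φ ((2:ℝ)^j * b - k) - Φ ((2:ℝ)^j * a - k)))|
        ≤ c * ((2:ℝ)^j)⁻¹ * (|Φ ((2:ℝ)^j * b - k)| + |Φ ((2:ℝ)^j * a - k)|) := by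
      intro k hk
      have he : |β j k * (2:ℝ)^((j:ℝ)/2) * (((2:ℝ)^j)⁻¹ * (Φ ((2:ℝ)^j * b - k) - Φ ((2:ℝ)^j * a - k)))|
          = |β j k| * (2:ℝ)^((j:ℝ)/2) * (((2:ℝ)^j)⁻¹ * |Φ ((2:ℝ)^j * b - k) - Φ ((2:ℝ)^j * a - k)|) := by
        rw [abs_mul, abs_mul, abs_mul, abs_of_nonneg (le_of_lt (Real.rpow_pos_of_pos (by norm_num) _)),
          abs_of_nonneg (by positivity : (0:ℝ) ≤ ((2:ℝ)^j)⁻¹)]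
      rw [he]
      have h1 : |β j k| ≤ c * (2:ℝ)^(-(j:ℝ)/2) := hβ2 j hj k hk
      have h2 : |Φ ((2:ℝ)^j * b - k) - Φ ((2:ℝ)^j * a - k)|
          ≤ |Φ ((2:ℝ)^j * b - k)| + |Φ ((2:ℝ)^j * a - k)| := abs_sub _ _
      calc |β j k| * (2:ℝ)^((j:ℝ)/2) * (((2:ℝ)^j)⁻¹ * |Φ ((2:ℝ)^j * b - k) - Φ ((2:ℝ)^j * a - k)|)
          ≤ (c * (2:ℝ)^(-(j:ℝ)/2)) * (2:ℝ)^((j:ℝ)/2)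
            * (((2:ℝ)^j)⁻¹ * (|Φ ((2:ℝ)^j * b - k)| + |Φ ((2:ℝ)^j * a - k)|)) := by
            gcongr
        _ = c * ((2:ℝ)^((j:ℝ)/2) * (2:ℝ)^(-(j:ℝ)/2))
            * (((2:ℝ)^j)⁻¹ * (|Φ ((2:ℝ)^j * b - k)| + |Φ ((2:ℝ)^j * a - k)|)) := by ring
        _ = c * ((2:ℝ)^j)⁻¹ * (|Φ ((2:ℝ)^j * b - k)| + |Φ ((2:ℝ)^j * a - k)|) := by
            rw [hrpow j, mul_one]; ring
    calc |∑ k ∈ Finset.range (2^j),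
          β j k * (2:ℝ)^((j:ℝ)/2) * (((2:ℝ)^j)⁻¹ * (Φ ((2:ℝ)^j * b - k) - Φ ((2:ℝ)^j * a - k)))|
        ≤ ∑ k ∈ Finset.range (2^j),
          |β j k * (2:ℝ)^((j:ℝ)/2) * (((2:ℝ)^j)⁻¹ * (Φ ((2:ℝ)^j * b - k) - Φ ((2:ℝ)^j * a - k)))| :=
          Finset.abs_sum_le_sum_abs _ _
      _ ≤ ∑ k ∈ Finset.range (2^j),
          c * ((2:ℝ)^j)⁻¹ * (|Φ ((2:ℝ)^j * b - k)| + |Φ ((2:ℝ)^j * a - k)|) :=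
          Finset.sum_le_sum hterm
      _ = c * ((2:ℝ)^j)⁻¹ * ((∑ k ∈ Finset.range (2^j), |Φ ((2:ℝ)^j * b - k)|)
          + ∑ k ∈ Finset.range (2^j), |Φ ((2:ℝ)^j * a - k)|) := by
          rw [← Finset.mul_sum, ← Finset.sum_add_distrib]
      _ ≤ c * ((2:ℝ)^j)⁻¹ * ((2*M+2) * N₁ + (2*M+2) * N₁) := by
          have hcb := aux_count M N₁ hM0 hN₁nn Φ hΦbd hΦzero ((2:ℝ)^j * b) (2^j)
          have hca := aux_count M N₁ hM0 hN₁nn Φ hΦbd hΦzero ((2:ℝ)^j * a) (2^j)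
          have : (0:ℝ) ≤ c * ((2:ℝ)^j)⁻¹ := by positivity
          push_cast at hcb hca ⊢
          exact mul_le_mul_of_nonneg_left (add_le_add hcb hca) this
      _ = C₁ * ((2:ℝ)⁻¹)^j := by
          rw [hC₁, inv_pow]
          ring
  -- L¹ bounds for the interchange
  have hgmeas : ∀ j : ℕ, IntegrableOn (g j) (Set.Ioc a b) := by
    intro j
    rw [hgdef]
    by_cases hj : J₁ < j
    · simp only [hj, if_true]
      exact integrable_finset_sum _ (fun k _ => (hIOck j k).const_mul _)
    · simp only [hj, if_false]
      exact integrableOn_zero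
  have hnormbd : ∀ j : ℕ, ∫ x in Set.Ioc a b, ‖g j x‖
      ≤ (c * N₁) * (Real.sqrt 2 / 2)^j := by
    intro j
    by_cases hj : J₁ < j
    · have hgf : ∀ x, g j x = f j x := fun x => by rw [hgdef]; simp [hj]
      have hstep1 : ∫ x in Set.Ioc a b, ‖g j x‖
          ≤ ∑ k ∈ Finset.range (2^j), |β j k| * (2:ℝ)^((j:ℝ)/2)
            * ∫ x in Set.Ioc a b, |ψ ((2:ℝ)^j * x - (k:ℝ))| := by
        have hint1 : IntegrableOn (fun x => ∑ k ∈ Finset.range (2^j),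
            |β j k| * (2:ℝ)^((j:ℝ)/2) * |ψ ((2:ℝ)^j * x - (k:ℝ))|) (Set.Ioc a b) :=
          integrable_finset_sum _ (fun k _ => ((hIOck j k).abs.const_mul _))
        have hptw : ∀ x, ‖g j x‖ ≤ ∑ k ∈ Finset.range (2^j),
            |β j k| * (2:ℝ)^((j:ℝ)/2) * |ψ ((2:ℝ)^j * x - (k:ℝ))| := by
          intro x
          rw [hgf x, Real.norm_eq_abs, hfdef]
          simp only
          refine (Finset.abs_sum_le_sum_abs _ _).trans ?_
          refine Finset.sum_le_sum (fun k _ => ?_)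
          rw [abs_mul, abs_mul, abs_of_nonneg (le_of_lt (Real.rpow_pos_of_pos (by norm_num) _))]
        calc ∫ x in Set.Ioc a b, ‖g j x‖
            ≤ ∫ x in Set.Ioc a b, ∑ k ∈ Finset.range (2^j),
              |β j k| * (2:ℝ)^((j:ℝ)/2) * |ψ ((2:ℝ)^j * x - (k:ℝ))| := by
              refine integral_mono_of_nonneg (ae_of_all _ fun x => norm_nonneg _) hint1
                (ae_of_all _ fun x => hptw x)
          _ = ∑ k ∈ Finset.range (2^j), |β j k| * (2:ℝ)^((j:ℝ)/2)
              * ∫ x in Set.Ioc a b, |ψ ((2:ℝ)^j * x - (k:ℝ))| := by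
              rw [integral_finset_sum _ (fun k _ => ((hIOck j k).abs.const_mul _))]
              exact Finset.sum_congr rfl (fun k _ => integral_const_mul _ _)
      have hψL1 : ∀ k : ℕ, ∫ x in Set.Ioc a b, |ψ ((2:ℝ)^j * x - (k:ℝ))|
          ≤ ((2:ℝ)^j)⁻¹ * N₁ := by
        intro k
        have hint2 : Integrable (fun x : ℝ => |ψ ((2:ℝ)^j * x - (k:ℝ))|) := by
          have h3 : Integrable (fun y : ℝ => ψ (y - (k:ℝ))) :=
            hψint'.comp_sub_right (k:ℝ)
          have h4 : Integrable (fun x : ℝ => ψ ((2:ℝ)^j * x - (k:ℝ))) := by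
            have := h3.comp_mul_left' (R := (2:ℝ)^j) (by positivity)
            simpa using this
          exact h4.abs
        have h5 : ∫ x : ℝ, |ψ ((2:ℝ)^j * x - (k:ℝ))| = ((2:ℝ)^j)⁻¹ * N₁ := by
          have h1 := MeasureTheory.Measure.integral_comp_mul_left
            (fun y : ℝ => |ψ (y - (k:ℝ))|) ((2:ℝ)^j)
          rw [h1, integral_sub_right_eq_self (fun y : ℝ => |ψ y|) (k:ℝ)]
          rw [smul_eq_mul, abs_of_nonneg (by positivity)]
        rw [← h5]
        exact setIntegral_le_integral hint2 (ae_of_all _ fun x => abs_nonneg _)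
      have hstep2 : ∑ k ∈ Finset.range (2^j), |β j k| * (2:ℝ)^((j:ℝ)/2)
            * ∫ x in Set.Ioc a b, |ψ ((2:ℝ)^j * x - (k:ℝ))|
          ≤ (∑ k ∈ Finset.range (2^j), |β j k|) * (2:ℝ)^((j:ℝ)/2) * (((2:ℝ)^j)⁻¹ * N₁) := by
        rw [Finset.sum_mul, Finset.sum_mul]
        refine Finset.sum_le_sum (fun k _ => ?_)
        rw [mul_assoc, mul_assoc]
        refine mul_le_mul_of_nonneg_left ?_ (abs_nonneg _)
        refine mul_le_mul_of_nonneg_left ?_ (by positivity)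
        exact hψL1 k
      refine (hstep1.trans hstep2).trans ?_
      have h6 : (∑ k ∈ Finset.range (2^j), |β j k|) * (2:ℝ)^((j:ℝ)/2) * (((2:ℝ)^j)⁻¹ * N₁)
          ≤ c * (2:ℝ)^((j:ℝ)/2) * (((2:ℝ)^j)⁻¹ * N₁) := by
        refine mul_le_mul_of_nonneg_right (mul_le_mul_of_nonneg_right (hβ1 j hj)
          (by positivity)) (by positivity)
      refine h6.trans ?_
      have h7 : (2:ℝ)^((j:ℝ)/2) = (Real.sqrt 2)^j := by
        rw [Real.sqrt_eq_rpow, ← Real.rpow_natCast ((2:ℝ) ^ ((1:ℝ)/2)) j,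
          ← Real.rpow_mul (by norm_num)]
        ring_nf
      have h8 : (Real.sqrt 2 / 2)^j = (2:ℝ)^((j:ℝ)/2) * ((2:ℝ)^j)⁻¹ := by
        rw [div_pow, ← h7, div_eq_mul_inv]
      rw [h8]
      exact le_of_eq (by ring)
    · have : ∀ x, g j x = 0 := fun x => by rw [hgdef]; simp [hj]
      simp only [this, norm_zero, integral_zero]
      positivity
  -- summability
  have hsqrt2lt : Real.sqrt 2 / 2 < 1 := by
    have h1 : Real.sqrt 2 < 2 := by
      nlinarith [Real.sq_sqrt (by norm_num : (0:ℝ) ≤ 2), Real.sqrt_nonneg 2]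
    linarith
  have hgeo : Summable (fun j : ℕ => (c * N₁) * (Real.sqrt 2 / 2)^j) :=
    (summable_geometric_of_lt_one (by positivity) hsqrt2lt).mul_left _
  have hSummable : Summable (fun j => ∫ x in Set.Ioc a b, ‖g j x‖) :=
    Summable.of_nonneg_of_le (fun j => integral_nonneg (fun x => norm_nonneg _))
      hnormbd hgeo
  -- interchange
  have hinter := MeasureTheory.integral_tsum_of_summable_integral_norm
    (μ := volume.restrict (Set.Ioc a b)) (F := g) (fun j => hgmeas j) hSummable
  -- rewrite the goal
  have hgoal1 : ∫ x in a..b, (∑' j : ℕ, if J₁ < j then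
      ∑ k ∈ Finset.range (2 ^ j), β j k * (2 : ℝ) ^ ((j : ℝ) / 2) * ψ ((2 : ℝ) ^ j * x - k)
      else 0) = ∑' j : ℕ, ∫ x in Set.Ioc a b, g j x := by
    rw [intervalIntegral.integral_of_le hab']
    rw [← hinter]
  rw [hgoal1]
  -- bound the tsum
  have habs_le : ∀ j : ℕ, |∫ x in Set.Ioc a b, g j x| ≤ ∫ x in Set.Ioc a b, ‖g j x‖ := by
    intro j
    rw [← Real.norm_eq_abs]
    exact norm_integral_le_integral_norm _
  have hsum2 : Summable (fun j => |∫ x in Set.Ioc a b, g j x|) :=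
    Summable.of_nonneg_of_le (fun j => abs_nonneg _) habs_le hSummable
  have hsum3 : Summable (fun j => ∫ x in Set.Ioc a b, g j x) := hsum2.of_abs
  have htsum_bd : |∑' j : ℕ, ∫ x in Set.Ioc a b, g j x| ≤ C₁ * ((2:ℝ)⁻¹)^J₁ := by
    have h1 : |∑' j : ℕ, ∫ x in Set.Ioc a b, g j x| ≤ ∑' j : ℕ, |∫ x in Set.Ioc a b, g j x| := by
      simpa [Real.norm_eq_abs] using norm_tsum_le_tsum_norm (f := fun j => ∫ x in Set.Ioc a b, g j x)
        (by simpa [Real.norm_eq_abs] using hsum2)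
    refine h1.trans ?_
    refine Summable.tsum_le_of_sum_le hsum2 (fun s => ?_)
    have h2 : ∑ j ∈ s, |∫ x in Set.Ioc a b, g j x|
        = ∑ j ∈ s.filter (fun j => J₁ < j), |∫ x in Set.Ioc a b, g j x| := by
      refine (Finset.sum_subset (Finset.filter_subset _ _) (fun j hj hj2 => ?_)).symm
      have hj3 : ¬ J₁ < j := fun h => hj2 (Finset.mem_filter.mpr ⟨hj, h⟩)
      have : ∀ x, g j x = 0 := fun x => by rw [hgdef]; simp [hj3]
      simp [this]
    rw [h2]
    have h3 : ∀ j ∈ s.filter (fun j => J₁ < j),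
        |∫ x in Set.Ioc a b, g j x| ≤ C₁ * ((2:ℝ)⁻¹)^j := by
      intro j hj
      have hj' : J₁ < j := (Finset.mem_filter.mp hj).2
      have hgf : ∀ x, g j x = f j x := fun x => by rw [hgdef]; simp [hj']
      have h4 : ∫ x in Set.Ioc a b, g j x = ∫ x in a..b, f j x := by
        rw [intervalIntegral.integral_of_le hab']
        exact integral_congr_ae (ae_of_all _ fun x => hgf x)
      rw [h4]
      exact hIj j hj'
    calc ∑ j ∈ s.filter (fun j => J₁ < j), |∫ x in Set.Ioc a b, g j x|
        ≤ ∑ j ∈ s.filter (fun j => J₁ < j), C₁ * ((2:ℝ)⁻¹)^j := Finset.sum_le_sum h3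
      _ = C₁ * ∑ j ∈ s.filter (fun j => J₁ < j), ((2:ℝ)⁻¹)^j := by rw [Finset.mul_sum]
      _ ≤ C₁ * ((2:ℝ)⁻¹)^J₁ := mul_le_mul_of_nonneg_left (aux_geom J₁ s) hC₁nn
  -- conclude
  have hba : 0 < b - a := by linarith
  rw [abs_mul, abs_of_nonneg (by positivity : (0:ℝ) ≤ (b-a)⁻¹)]
  calc (b-a)⁻¹ * |∑' j : ℕ, ∫ x in Set.Ioc a b, g j x|
      ≤ (b-a)⁻¹ * (C₁ * ((2:ℝ)⁻¹)^J₁) := mul_le_mul_of_nonneg_left htsum_bd (by positivity)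
    _ = C₁ / ((2:ℝ)^J₁ * (b-a)) := by
        rw [inv_pow, div_eq_mul_inv, mul_inv]
        ring
    _ ≤ (C₁ + 1) / ((2:ℝ)^J₁ * (b-a)) := by
        gcongr
        linarith
end
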